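/- (Proposition 1.) Let there be n units with binary treatment indicators Z_i ∈ {0,1}, a single partially observed covariate with values X_i ∈ ℝ and missingness indicators R_i ∈ {0,1} (R_i = 1 if X_i is observed). Suppose the working treatment propensity scores are estimated from the logistic regression model with intercept and predictors X_iR_i and R_i, i.e., ê_i = 1/(1 + exp(−(θ̂_0 + θ̂_1 X_iR_i + θ̂_2 R_i))) where θ̂ = (θ̂_0, θ̂_1, θ̂_2) is a local maximum of the logistic log-likelihood ℓ(θ) = ∑_{i=1}^n [Z_i(θ_0 + θ_1 X_iR_i + θ_2 R_i) − log(1 + exp(θ_0 + θ_1 X_iR_i + θ_2 R_i))]. If ∑_i Z_i(1 − ê_i) ≠ 0 and ∑_i (1 − Z_i) ê_i ≠ 0, then the resulting overlap weights lead to exact balance in the means of each predictor W ∈ {XR, R} between the treatment and control groups: [∑_i W_i Z_i(1 − ê_i)] / [∑_i Z_i(1 − ê_i)] = [∑_i W_i (1 − Z_i) ê_i] / [∑_i (1 − Z_i) ê_i]. -/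

import Mathlib

open Finset

/-- Proposition 1: when the working treatment propensity scores are estimated by
logistic regression with intercept and predictors `X*R` and `R` (a local maximum
`θ̂` of the logistic log-likelihood), the resulting overlap weights exactly
balance the means of each predictor `W ∈ {X*R, R}` between the treatment and
control groups. -/
theorem overlap_weights_exact_balance_missing_indicator
    (n : ℕ) (Z X R : Fin n → ℝ)
    (hZ : ∀ i, Z i = 0 ∨ Z i = 1) (hR : ∀ i, R i = 0 ∨ R i = 1)
    (ℓ : (Fin 3 → ℝ) → ℝ)
    (hℓ : ℓ = fun θ => ∑ i,
        (Z i * (θ 0 + θ 1 * (X i * R i) + θ 2 * R i)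
          - Real.log (1 + Real.exp (θ 0 + θ 1 * (X i * R i) + θ 2 * R i))))
    (θhat : Fin 3 → ℝ) (hmax : IsLocalMax ℓ θhat)
    (ehat : Fin n → ℝ)
    (hehat : ehat = fun i =>
        1 / (1 + Real.exp (-(θhat 0 + θhat 1 * (X i * R i) + θhat 2 * R i))))
    (hd1 : ∑ i, Z i * (1 - ehat i) ≠ 0)
    (hd0 : ∑ i, (1 - Z i) * ehat i ≠ 0) :
    ((∑ i, (X i * R i) * Z i * (1 - ehat i)) / (∑ i, Z i * (1 - ehat i)) =
        (∑ i, (X i * R i) * (1 - Z i) * ehat i) / (∑ i, (1 - Z i) * ehat i)) ∧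
    ((∑ i, R i * Z i * (1 - ehat i)) / (∑ i, Z i * (1 - ehat i)) =
        (∑ i, R i * (1 - Z i) * ehat i) / (∑ i, (1 - Z i) * ehat i)) := by
  set u : Fin n → ℝ := fun i => θhat 0 + θhat 1 * (X i * R i) + θhat 2 * R i with hu
  have hehat' : ∀ i, ehat i = Real.exp (u i) / (1 + Real.exp (u i)) := by
    intro i
    rw [hehat]
    simp only
    rw [Real.exp_neg]
    have h1 : Real.exp (u i) ≠ 0 := (Real.exp_pos _).ne'
    have h2 : (0:ℝ) < 1 + Real.exp (u i) := by positivity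
    rw [hu]
    field_simp
    ring
  have score : ∀ v : Fin 3 → ℝ,
      ∑ i, (v 0 + v 1 * (X i * R i) + v 2 * R i) * (Z i - ehat i) = 0 := by
    intro v
    set a : Fin n → ℝ := fun i => v 0 + v 1 * (X i * R i) + v 2 * R i with ha
    set g : ℝ → ℝ := fun t => ℓ (θhat + t • v) with hg
    have hφ : Continuous (fun t : ℝ => θhat + t • v) := by continuity
    have hg0 : IsLocalMax g 0 := by
      have ht : Filter.Tendsto (fun t : ℝ => θhat + t • v) (nhds 0) (nhds θhat) := by
        have := hφ.tendsto 0
        simpa using this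
      have h := ht.eventually hmax
      have hval : g 0 = ℓ θhat := by simp [hg]
      unfold IsLocalMax IsMaxFilter
      rw [hval]
      exact h
    have key : ∀ i : Fin n,
        HasDerivAt (fun t => Z i * (u i + t * a i)
            - Real.log (1 + Real.exp (u i + t * a i)))
          (a i * (Z i - Real.exp (u i) / (1 + Real.exp (u i)))) 0 := by
      intro i
      have hw : HasDerivAt (fun t : ℝ => u i + t * a i) (a i) 0 :=
        (hasDerivAt_mul_const (a i)).const_add (u i)
      have h1 : HasDerivAt (fun t => Z i * (u i + t * a i)) (Z i * a i) 0 :=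
        hw.const_mul (Z i)
      have he : HasDerivAt (fun t => Real.exp (u i + t * a i))
          (Real.exp (u i + 0 * a i) * a i) 0 := hw.exp
      have hadd : HasDerivAt (fun t => 1 + Real.exp (u i + t * a i))
          (Real.exp (u i + 0 * a i) * a i) 0 := he.const_add 1
      have hpos : (0:ℝ) < 1 + Real.exp (u i + 0 * a i) := by positivity
      have hlog := hadd.log hpos.ne'
      have := h1.fun_sub hlog
      refine this.congr_deriv ?_
      have hpos2 : (0:ℝ) < 1 + Real.exp (u i) := by positivity
      simp only [zero_mul, add_zero]
      field_simp
    have hgeq : g = fun t => ∑ i,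
        (Z i * (u i + t * a i) - Real.log (1 + Real.exp (u i + t * a i))) := by
      funext t
      rw [hg, hℓ]
      simp only
      refine Finset.sum_congr rfl (fun i _ => ?_)
      have hx : (θhat + t • v) 0 + (θhat + t • v) 1 * (X i * R i)
          + (θhat + t • v) 2 * R i = u i + t * a i := by
        simp only [Pi.add_apply, Pi.smul_apply, smul_eq_mul, hu, ha]
        ring
      rw [hx]
    have hsum : HasDerivAt g
        (∑ i, a i * (Z i - Real.exp (u i) / (1 + Real.exp (u i)))) 0 := by
      rw [hgeq]
      exact HasDerivAt.fun_sum (fun i _ => key i)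
    have hzero := hg0.hasDerivAt_eq_zero hsum
    calc ∑ i, a i * (Z i - ehat i)
        = ∑ i, a i * (Z i - Real.exp (u i) / (1 + Real.exp (u i))) :=
          Finset.sum_congr rfl (fun i _ => by rw [hehat' i])
      _ = 0 := hzero
  have s0 : ∑ i, (Z i - ehat i) = 0 := by
    have := score ![1, 0, 0]
    simpa using this
  have s1 : ∑ i, (X i * R i) * (Z i - ehat i) = 0 := by
    have := score ![0, 1, 0]
    simpa using this
  have s2 : ∑ i, R i * (Z i - ehat i) = 0 := by
    have := score ![0, 0, 1]
    simpa using this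
  have hden : ∑ i, Z i * (1 - ehat i) = ∑ i, (1 - Z i) * ehat i := by
    have h : ∑ i, (Z i * (1 - ehat i) - (1 - Z i) * ehat i) = 0 := by
      calc ∑ i, (Z i * (1 - ehat i) - (1 - Z i) * ehat i)
          = ∑ i, (Z i - ehat i) := Finset.sum_congr rfl (fun i _ => by ring)
        _ = 0 := s0
    rw [Finset.sum_sub_distrib] at h
    linarith
  have hnum1 : ∑ i, (X i * R i) * Z i * (1 - ehat i)
      = ∑ i, (X i * R i) * (1 - Z i) * ehat i := by
    have h : ∑ i, ((X i * R i) * Z i * (1 - ehat i)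
        - (X i * R i) * (1 - Z i) * ehat i) = 0 := by
      calc ∑ i, ((X i * R i) * Z i * (1 - ehat i) - (X i * R i) * (1 - Z i) * ehat i)
          = ∑ i, (X i * R i) * (Z i - ehat i) :=
            Finset.sum_congr rfl (fun i _ => by ring)
        _ = 0 := s1
    rw [Finset.sum_sub_distrib] at h
    linarith
  have hnum2 : ∑ i, R i * Z i * (1 - ehat i)
      = ∑ i, R i * (1 - Z i) * ehat i := by
    have h : ∑ i, (R i * Z i * (1 - ehat i) - R i * (1 - Z i) * ehat i) = 0 := by
      calc ∑ i, (R i * Z i * (1 - ehat i) - R i * (1 - Z i) * ehat i)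
          = ∑ i, R i * (Z i - ehat i) :=
            Finset.sum_congr rfl (fun i _ => by ring)
        _ = 0 := s2
    rw [Finset.sum_sub_distrib] at h
    linarith
  exact ⟨by rw [hnum1, hden], by rw [hnum2, hden]⟩
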